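/- The function f(v) = e^v satisfies the fourth-order ODE f''''·f'' = (f''')², and conversely every solution of f''''·f'' = (f''')² with f''' nowhere zero on an interval is of the form f(v) = a·e^{λv} + b·v² + c·v + d for constants a, λ ≠ 0, b, c, d. -/

import Mathlib

open Real Set

lemma const_on_Ioo {α β : ℝ} (u : ℝ → ℝ) (hd : ∀ x ∈ Ioo α β, HasDerivAt u 0 x)
    {x y : ℝ} (hx : x ∈ Ioo α β) (hy : y ∈ Ioo α β) : u x = u y := by
  apply (convex_Ioo α β).is_const_of_fderivWithin_eq_zero
    (fun z hz => (hd z hz).differentiableAt.differentiableWithinAt) ?_ hx hy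
  intro z hz
  rw [fderivWithin_of_isOpen isOpen_Ioo hz, (hd z hz).hasFDerivAt.fderiv]
  refine ContinuousLinearMap.ext fun t => ?_
  simp

lemma iter_exp (n : ℕ) : iteratedDeriv n Real.exp = Real.exp := by
  induction n with
  | zero => simp
  | succ n ih => rw [iteratedDeriv_succ, ih, Real.deriv_exp]

theorem stmt0 :
    (∀ v : ℝ, iteratedDeriv 4 Real.exp v * iteratedDeriv 2 Real.exp v
        = (iteratedDeriv 3 Real.exp v) ^ 2) ∧
    (∀ (f : ℝ → ℝ) (α β : ℝ), α < β → ContDiff ℝ 4 f →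
      (∀ v ∈ Ioo α β,
        iteratedDeriv 4 f v * iteratedDeriv 2 f v = (iteratedDeriv 3 f v) ^ 2) →
      (∀ v ∈ Ioo α β, iteratedDeriv 3 f v ≠ 0) →
      ∃ a lam b c d : ℝ, a ≠ 0 ∧ lam ≠ 0 ∧
        ∀ v ∈ Ioo α β, f v = a * Real.exp (lam * v) + b * v ^ 2 + c * v + d) := by
  constructor
  · intro v; simp [iter_exp, sq]
  intro f α β hαβ hf hODE hne
  set g : ℝ → ℝ := iteratedDeriv 2 f with hg
  -- differentiability facts
  have hdf : Differentiable ℝ f := hf.differentiable (by norm_num)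
  have hd1 : Differentiable ℝ (deriv f) := by
    have := hf.differentiable_iteratedDeriv 1 (by norm_num)
    rwa [iteratedDeriv_one] at this
  have hdg : Differentiable ℝ g := hf.differentiable_iteratedDeriv 2 (by norm_num)
  have hdg' : Differentiable ℝ (iteratedDeriv 3 f) :=
    hf.differentiable_iteratedDeriv 3 (by norm_num)
  have hgd : ∀ x, HasDerivAt g (iteratedDeriv 3 f x) x := by
    intro x
    rw [iteratedDeriv_succ]
    exact (hdg x).hasDerivAt
  have hgd3 : ∀ x, HasDerivAt (iteratedDeriv 3 f) (iteratedDeriv 4 f x) x := by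
    intro x
    rw [show iteratedDeriv 4 f = deriv (iteratedDeriv 3 f) from iteratedDeriv_succ]
    exact (hdg' x).hasDerivAt
  have hgne : ∀ x ∈ Ioo α β, g x ≠ 0 := by
    intro x hx h0
    have := hODE x hx
    rw [h0, mul_zero] at this
    exact hne x hx (pow_eq_zero_iff (by norm_num) |>.mp this.symm)
  set v₀ : ℝ := (α + β) / 2 with hv₀
  have hv₀m : v₀ ∈ Ioo α β := ⟨by linarith, by linarith⟩
  set lam : ℝ := iteratedDeriv 3 f v₀ / g v₀ with hlam
  have hlamne : lam ≠ 0 := div_ne_zero (hne v₀ hv₀m) (hgne v₀ hv₀m)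
  -- g'/g is constant lam
  have hratio : ∀ x ∈ Ioo α β, iteratedDeriv 3 f x = lam * g x := by
    intro x hx
    have : iteratedDeriv 3 f x / g x = iteratedDeriv 3 f v₀ / g v₀ := by
      apply const_on_Ioo (fun z => iteratedDeriv 3 f z / g z) ?_ hx hv₀m
      intro z hz
      have h := ((hgd3 z).div (hgd z) (hgne z hz))
      have e : (iteratedDeriv 4 f z * g z - iteratedDeriv 3 f z * iteratedDeriv 3 f z) / g z ^ 2 = 0 := by
        rw [div_eq_zero_iff]; left
        have := hODE z hz; rw [sq] at this; linarith
      rwa [e] at h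
    exact (div_eq_iff (hgne x hx)).mp this
  -- g x * exp(-lam x) constant
  set C : ℝ := g v₀ * Real.exp (-lam * v₀) with hC
  have hCne : C ≠ 0 := mul_ne_zero (hgne v₀ hv₀m) (Real.exp_ne_zero _)
  have hgeq : ∀ x ∈ Ioo α β, g x = C * Real.exp (lam * x) := by
    intro x hx
    have : g x * Real.exp (-lam * x) = g v₀ * Real.exp (-lam * v₀) := by
      apply const_on_Ioo (fun z => g z * Real.exp (-lam * z)) ?_ hx hv₀m
      intro z hz
      have he : HasDerivAt (fun z => Real.exp (-lam * z)) (-lam * Real.exp (-lam * z)) z := by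
        have := (((hasDerivAt_id z).const_mul (-lam))).exp
        simpa [mul_comm] using this
      have h := (hgd z).mul he
      have e : iteratedDeriv 3 f z * Real.exp (-lam * z) + g z * (-lam * Real.exp (-lam * z)) = 0 := by
        rw [hratio z hz]; ring
      rwa [e] at h
    have hmul : Real.exp (-lam * x) * Real.exp (lam * x) = 1 := by
      rw [← Real.exp_add]; ring_nf; exact Real.exp_zero
    calc g x = g x * Real.exp (-lam * x) * Real.exp (lam * x) := by
          rw [mul_assoc, hmul, mul_one]
      _ = g v₀ * Real.exp (-lam * v₀) * Real.exp (lam * x) := by rw [this]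
  -- now integrate twice
  set a : ℝ := C / lam ^ 2 with ha
  have hane : a ≠ 0 := div_ne_zero hCne (pow_ne_zero _ hlamne)
  set p : ℝ → ℝ := fun z => f z - a * Real.exp (lam * z) with hp
  have hexp1 : ∀ z : ℝ, HasDerivAt (fun z => Real.exp (lam * z)) (lam * Real.exp (lam * z)) z := by
    intro z
    have := (((hasDerivAt_id z).const_mul lam)).exp
    simpa [mul_comm] using this
  have hpd : ∀ z : ℝ, HasDerivAt p (deriv f z - a * (lam * Real.exp (lam * z))) z := by
    intro z
    exact ((hdf z).hasDerivAt).sub ((hexp1 z).const_mul a)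
  have hpderiv : ∀ z, deriv p z = deriv f z - a * lam * Real.exp (lam * z) := by
    intro z; rw [(hpd z).deriv]; ring
  have hp2 : ∀ x ∈ Ioo α β, HasDerivAt (deriv p) 0 x := by
    intro x hx
    have hfd2 : HasDerivAt (deriv f) (g x) x := by
      have : g = deriv (deriv f) := by
        rw [hg, iteratedDeriv_succ, iteratedDeriv_one]
      rw [this]
      exact (hd1 x).hasDerivAt
    have h := hfd2.sub (((hexp1 x).const_mul (a * lam)))
    have heq : (deriv f - fun z => a * lam * Real.exp (lam * z)) = deriv p := by
      funext z; rw [hpderiv z]; rfl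
    rw [heq] at h
    have e : g x - a * lam * (lam * Real.exp (lam * x)) = 0 := by
      rw [hgeq x hx, ha]
      field_simp
      ring
    rwa [e] at h
  set c : ℝ := deriv p v₀ with hc
  have hpc : ∀ x ∈ Ioo α β, deriv p x = c := fun x hx =>
    const_on_Ioo (deriv p) hp2 hx hv₀m
  set d : ℝ := p v₀ - c * v₀ with hd
  refine ⟨a, lam, 0, c, d, hane, hlamne, ?_⟩
  intro v hv
  have : p v - c * v = p v₀ - c * v₀ := by
    apply const_on_Ioo (fun z => p z - c * z) ?_ hv hv₀m
    intro z hz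
    have h := ((hpd z).sub ((hasDerivAt_id z).const_mul c))
    have e : deriv f z - a * (lam * Real.exp (lam * z)) - c * 1 = 0 := by
      have := hpc z hz
      rw [hpderiv z] at this
      linarith
    rwa [e] at h
  have hpv : p v = c * v + d := by rw [hd]; linarith
  have hpv2 : f v - a * Real.exp (lam * v) = c * v + d := hpv
  linarith
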